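/- Let S ⊆ ℓ^∞ be the set consisting of the zero sequence together with all sequences having a single nonzero entry equal to i/k_n in position k_nⁱ (for i ∈ {1,…,k_n} and n ∈ ℕ), where (k_n) is an increasing sequence of primes. With T : S → S mapping the zero sequence and the point with entry 1 in position k_n^{k_n} to zero, and mapping the point with entry i/k_n in position k_nⁱ to the point with entry (i+1)/k_n in position k_n^{i+1} (for 1 ≤ i ≤ k_n − 1), the pushforward Markov operator P = T_* is asymptotically stable with invariant measure δ₀, but does not satisfy the Cesàro e-property at 0: for a continuous f : S → [0,∞) with f(0) = 0 and f(x) = 1 whenever ‖x‖_∞ ≥ 1/2, one has (1/k_n)∑_{i=1}^{k_n} Uⁱf(x_n) − (1/k_n)∑_{i=1}^{k_n} Uⁱf(0) ≥ 1/2, where x_n is the point with entry 1/k_n in position k_n. -/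

import Mathlib

open MeasureTheory Filter Topology
open scoped ENNReal

/-- Example 2 of the paper: the subset `S` of `ℓ^∞` consisting of the zero sequence together
with the points having a single nonzero entry `i/k_n` in position `k_nⁱ` (for `1 ≤ i ≤ k_n`,
`(k_n)` an increasing sequence of primes), with `T` cycling these points as described, yields
an asymptotically stable pushforward Markov operator which fails the Cesàro e-property at `0`:
for any continuous `f ≥ 0` with `f(0) = 0` and `f(x) = 1` for `‖x‖_∞ ≥ 1/2`, the Cesàro
averages at the points `x_n` (entry `1/k_n` in position `k_n`) differ from those at `0` by at
least `1/2`. -/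
theorem stmt11
    (k : ℕ → ℕ) (hkmono : StrictMono k) (hkprime : ∀ n, (k n).Prime)
    (Sset : Set (lp (fun _ : ℕ => ℝ) ⊤))
    (hS : Sset = {x : lp (fun _ : ℕ => ℝ) ⊤ | ⇑x = (0 : ℕ → ℝ) ∨
      ∃ n i : ℕ, 1 ≤ i ∧ i ≤ k n ∧ ⇑x = (Pi.single (k n ^ i) ((i : ℝ) / (k n : ℝ)) : ℕ → ℝ)})
    [MeasurableSpace ↥Sset] [BorelSpace ↥Sset]
    (T : ↥Sset → ↥Sset) (hTm : Measurable T)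
    (hT0 : ∀ x : ↥Sset, ⇑(x : lp (fun _ : ℕ => ℝ) ⊤) = (0 : ℕ → ℝ) →
      ⇑(T x : lp (fun _ : ℕ => ℝ) ⊤) = (0 : ℕ → ℝ))
    (hTtop : ∀ x : ↥Sset, ∀ n : ℕ,
      ⇑(x : lp (fun _ : ℕ => ℝ) ⊤) = (Pi.single (k n ^ k n) (1 : ℝ) : ℕ → ℝ) →
      ⇑(T x : lp (fun _ : ℕ => ℝ) ⊤) = (0 : ℕ → ℝ))
    (hTstep : ∀ x : ↥Sset, ∀ n i : ℕ, 1 ≤ i → i ≤ k n - 1 →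
      ⇑(x : lp (fun _ : ℕ => ℝ) ⊤) = (Pi.single (k n ^ i) ((i : ℝ) / (k n : ℝ)) : ℕ → ℝ) →
      ⇑(T x : lp (fun _ : ℕ => ℝ) ⊤) =
        (Pi.single (k n ^ (i + 1)) (((i : ℝ) + 1) / (k n : ℝ)) : ℕ → ℝ))
    (f : ↥Sset → ℝ) (hfc : Continuous f) (hfpos : ∀ x, 0 ≤ f x)
    (hf0 : ∀ x : ↥Sset, ⇑(x : lp (fun _ : ℕ => ℝ) ⊤) = (0 : ℕ → ℝ) → f x = 0)
    (hf1 : ∀ x : ↥Sset, (1 / 2 : ℝ) ≤ ‖(x : lp (fun _ : ℕ => ℝ) ⊤)‖ → f x = 1) :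
    -- asymptotic stability: δ₀ is invariant, unique, and attracts all iterates weakly
    (∀ z : ↥Sset, ⇑(z : lp (fun _ : ℕ => ℝ) ⊤) = (0 : ℕ → ℝ) →
      (Measure.map T (Measure.dirac z) = Measure.dirac z) ∧
      (∀ μ : Measure ↥Sset, IsProbabilityMeasure μ → Measure.map T μ = μ →
        μ = Measure.dirac z) ∧
      (∀ μ : Measure ↥Sset, IsProbabilityMeasure μ →
        ∀ g : ↥Sset → ℝ, Continuous g → (∃ C, ∀ x, |g x| ≤ C) →
          Tendsto (fun m => ∫ x, g x ∂ (Measure.map (T^[m]) μ)) atTop (𝓝 (g z)))) ∧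
    -- failure of the Cesàro e-property at 0, witnessed by the points xₙ with entry
    -- 1/kₙ in position kₙ
    (∀ n : ℕ, ∀ x z : ↥Sset,
      ⇑(x : lp (fun _ : ℕ => ℝ) ⊤) = (Pi.single (k n) ((k n : ℝ)⁻¹) : ℕ → ℝ) →
      ⇑(z : lp (fun _ : ℕ => ℝ) ⊤) = (0 : ℕ → ℝ) →
      (1 / 2 : ℝ) ≤ (k n : ℝ)⁻¹ * ∑ i ∈ Finset.range (k n), f (T^[i + 1] x)
        - (k n : ℝ)⁻¹ * ∑ i ∈ Finset.range (k n), f (T^[i + 1] z)) := by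
  have hinj : ∀ x y : ↥Sset,
      ⇑(x : lp (fun _ : ℕ => ℝ) ⊤) = ⇑(y : lp (fun _ : ℕ => ℝ) ⊤) → x = y := by
    intro x y h
    exact Subtype.ext (lp.ext h)
  constructor
  · intro z hz
    have hfix : T z = z := hinj _ _ (by rw [hT0 z hz, hz])
    have hzero : ∀ x : ↥Sset, ⇑(x : lp (fun _ : ℕ => ℝ) ⊤) = (0 : ℕ → ℝ) → T x = z :=
      fun x hx => hinj _ _ (by rw [hT0 x hx, hz])
    -- every point reaches z in finitely many steps
    have hreach : ∀ x : ↥Sset, ∃ m, T^[m] x = z := by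
      have key : ∀ d : ℕ, ∀ n i : ℕ, 1 ≤ i → i ≤ k n → k n - i = d → ∀ x : ↥Sset,
          ⇑(x : lp (fun _ : ℕ => ℝ) ⊤) =
            (Pi.single (k n ^ i) ((i : ℝ) / (k n : ℝ)) : ℕ → ℝ) →
          ∃ m, T^[m] x = z := by
        intro d
        induction d with
        | zero =>
          intro n i h1 h2 hd x hxe
          have hik : i = k n := by omega
          have hkn0 : (k n : ℝ) ≠ 0 := by
            have := (hkprime n).two_le
            positivity
          have hco : ⇑(T x : lp (fun _ : ℕ => ℝ) ⊤) = (0 : ℕ → ℝ) := by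
            refine hTtop x n ?_
            rw [hxe, hik]
            congr 1
            field_simp
          exact ⟨1, by simpa using hinj _ _ (hco.trans hz.symm)⟩
        | succ d ih =>
          intro n i h1 h2 hd x hxe
          have hstep := hTstep x n i h1 (by omega) hxe
          have hco : ⇑(T x : lp (fun _ : ℕ => ℝ) ⊤) =
              (Pi.single (k n ^ (i + 1)) (((i + 1 : ℕ) : ℝ) / (k n : ℝ)) : ℕ → ℝ) := by
            rw [hstep]
            congr 1
            push_cast
            ring
          obtain ⟨m, hm⟩ := ih n (i + 1) (by omega) (by omega) (by omega) (T x) hco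
          exact ⟨m + 1, by rw [Function.iterate_succ_apply]; exact hm⟩
      intro x
      have hx := x.2
      simp only [hS, Set.mem_setOf_eq] at hx
      rcases hx with hx | ⟨n, i, h1, h2, hxe⟩
      · exact ⟨1, by simpa using hzero x hx⟩
      · exact key (k n - i) n i h1 h2 rfl x hxe
    refine ⟨?_, ?_, ?_⟩
    · rw [Measure.map_dirac' hTm, hfix]
    · intro μ hμ hinv
      haveI := hμ
      haveI : IsFiniteMeasure μ := ⟨by rw [hμ.measure_univ]; exact ENNReal.one_lt_top⟩
      haveI hmsc : MeasurableSingletonClass ↥Sset := by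
        set_option synthInstance.maxHeartbeats 1000000 in
        exact ⟨fun a => IsClosed.measurableSet isClosed_singleton⟩
      have hiter_inv : ∀ m, Measure.map (T^[m]) μ = μ := by
        intro m
        induction m with
        | zero => simp
        | succ m ih =>
          rw [Function.iterate_succ, ← Measure.map_map (hTm.iterate m) hTm, hinv, ih]
      have hμz : μ {z} = 1 := by
        have h1 : ∀ m, μ (T^[m] ⁻¹' {z}) = μ {z} := by
          intro m
          conv_rhs => rw [← hiter_inv m]
          rw [Measure.map_apply (hTm.iterate m) (measurableSet_singleton z)]
        have hmono : Monotone fun m => T^[m] ⁻¹' {z} := by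
          refine monotone_nat_of_le_succ fun m x hx => ?_
          simp only [Set.mem_preimage, Set.mem_singleton_iff] at hx ⊢
          rw [Function.iterate_succ_apply', hx, hfix]
        have hun : (⋃ m, T^[m] ⁻¹' {z}) = Set.univ := by
          ext x
          simp only [Set.mem_iUnion, Set.mem_preimage, Set.mem_singleton_iff, Set.mem_univ,
            iff_true]
          exact hreach x
        have := hmono.directed_le.measure_iUnion (μ := μ)
        rw [hun] at this
        simp only [h1, iSup_const] at this
        rw [← this, measure_univ]
      ext s hs
      rw [Measure.dirac_apply' z hs]
      by_cases hzs : z ∈ s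
      · rw [Set.indicator_of_mem hzs, Pi.one_apply]
        refine le_antisymm prob_le_one ?_
        calc (1 : ℝ≥0∞) = μ {z} := hμz.symm
          _ ≤ μ s := measure_mono (Set.singleton_subset_iff.2 hzs)
      · rw [Set.indicator_of_notMem hzs]
        have : μ s ≤ μ {z}ᶜ := measure_mono fun y hy => by
          simp only [Set.mem_compl_iff, Set.mem_singleton_iff]
          rintro rfl; exact hzs hy
        have hc : μ {z}ᶜ = 0 := by
          rw [measure_compl (measurableSet_singleton z) (measure_ne_top μ _), hμz,
            measure_univ, tsub_self]
        exact le_antisymm (this.trans hc.le) zero_le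
    · intro μ hμ g hg hC
      haveI := hμ
      haveI : IsFiniteMeasure μ := ⟨by rw [hμ.measure_univ]; exact ENNReal.one_lt_top⟩
      obtain ⟨C, hC⟩ := hC
      have heq : (fun m => ∫ x, g x ∂(Measure.map (T^[m]) μ)) =
          fun m => ∫ x, g (T^[m] x) ∂μ := by
        funext m
        rw [integral_map (hTm.iterate m).aemeasurable hg.aestronglyMeasurable]
      rw [heq]
      have hgz : g z = ∫ _, g z ∂μ := by simp
      rw [hgz]
      refine tendsto_integral_of_dominated_convergence (fun _ => C)
        (fun m => (hg.measurable.comp (hTm.iterate m)).aestronglyMeasurable)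
        (integrable_const C) (fun m => Eventually.of_forall fun x => ?_)
        (Eventually.of_forall fun x => ?_)
      · simpa [Real.norm_eq_abs] using hC (T^[m] x)
      · obtain ⟨M, hM⟩ := hreach x
        refine tendsto_const_nhds.congr' ?_
        filter_upwards [eventually_ge_atTop M] with m hm
        have : T^[m] x = z := by
          have h1 : m - M + M = m := by omega
          rw [← h1, Function.iterate_add_apply, hM, Function.iterate_fixed hfix]
        rw [this]
  · intro n x z hx hz
    have hp2 : 2 ≤ k n := (hkprime n).two_le
    have hp0 : (0 : ℝ) < k n := by exact_mod_cast Nat.lt_of_lt_of_le (by norm_num) hp2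
    -- iterates of z stay at zero
    have hz_iter : ∀ m, ⇑(T^[m] z : lp (fun _ : ℕ => ℝ) ⊤) = (0 : ℕ → ℝ) := by
      intro m
      induction m with
      | zero => simpa using hz
      | succ m ih => rw [Function.iterate_succ_apply']; exact hT0 _ ih
    -- iterates of x
    have hx_iter : ∀ j, j ≤ k n - 1 →
        ⇑(T^[j] x : lp (fun _ : ℕ => ℝ) ⊤) =
          (Pi.single (k n ^ (j + 1)) (((j + 1 : ℕ) : ℝ) / (k n : ℝ)) : ℕ → ℝ) := by
      intro j
      induction j with
      | zero =>
        intro _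
        simpa [pow_one, one_div] using hx
      | succ j ih =>
        intro hj
        have hco := ih (by omega)
        have hstep := hTstep (T^[j] x) n (j + 1) (by omega) (by omega) hco
        rw [Function.iterate_succ_apply', hstep]
        congr 1
        push_cast
        ring
    -- on a long tail, f equals 1
    have hone : ∀ j ∈ Finset.Ico (k n / 2 - 1) (k n - 1), f (T^[j + 1] x) = 1 := by
      intro j hj
      rw [Finset.mem_Ico] at hj
      have hjle : j + 1 ≤ k n - 1 := by omega
      have hco := hx_iter (j + 1) hjle
      refine hf1 _ ?_
      have hb := lp.norm_apply_le_norm (ENNReal.top_ne_zero)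
        ((T^[j + 1] x : lp (fun _ : ℕ => ℝ) ⊤)) (k n ^ (j + 1 + 1))
      have happ : (T^[j + 1] x : lp (fun _ : ℕ => ℝ) ⊤) (k n ^ (j + 1 + 1)) =
          ((j + 1 + 1 : ℕ) : ℝ) / (k n : ℝ) := by
        rw [congrFun hco (k n ^ (j + 1 + 1)), Pi.single_eq_same]
      rw [happ, Real.norm_of_nonneg (by positivity)] at hb
      refine le_trans ?_ hb
      rw [div_le_div_iff₀ (by norm_num) hp0, one_mul]
      have h2j : k n ≤ 2 * (j + 1 + 1) := by omega
      calc (k n : ℝ) ≤ 2 * ((j + 1 + 1 : ℕ) : ℝ) := by exact_mod_cast h2j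
        _ = ((j + 1 + 1 : ℕ) : ℝ) * 2 := by ring
    -- the sum at z vanishes
    have hzsum : ∑ i ∈ Finset.range (k n), f (T^[i + 1] z) = 0 :=
      Finset.sum_eq_zero fun i _ => hf0 _ (hz_iter (i + 1))
    -- lower bound for the sum at x
    have hsub : Finset.Ico (k n / 2 - 1) (k n - 1) ⊆ Finset.range (k n) := by
      intro j hj
      rw [Finset.mem_Ico] at hj
      rw [Finset.mem_range]
      omega
    have hcard : (Finset.Ico (k n / 2 - 1) (k n - 1)).card = (k n - 1) - (k n / 2 - 1) :=
      Nat.card_Ico _ _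
    have hSlow : (((k n - 1) - (k n / 2 - 1) : ℕ) : ℝ) ≤
        ∑ i ∈ Finset.range (k n), f (T^[i + 1] x) := by
      calc (((k n - 1) - (k n / 2 - 1) : ℕ) : ℝ)
          = ∑ j ∈ Finset.Ico (k n / 2 - 1) (k n - 1), f (T^[j + 1] x) := by
            rw [Finset.sum_congr rfl hone, Finset.sum_const, hcard, nsmul_eq_mul, mul_one]
        _ ≤ ∑ i ∈ Finset.range (k n), f (T^[i + 1] x) :=
            Finset.sum_le_sum_of_subset_of_nonneg hsub fun i _ _ => hfpos _
    rw [hzsum, mul_zero, sub_zero, le_inv_mul_iff₀ hp0]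
    have h2c : k n ≤ 2 * ((k n - 1) - (k n / 2 - 1)) := by omega
    have h2c' : (k n : ℝ) ≤ 2 * (((k n - 1) - (k n / 2 - 1) : ℕ) : ℝ) := by exact_mod_cast h2c
    linarith
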